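/- Let t be a positive integer and let G = ⟨a, b | a^(3^(t+1)) = b^(3^t) = 1, b^(-1)ab = a^(1+3^t)⟩. Then there is no automorphism of G mapping a to a^(-1) and b to a^(3t)b^(-1). -/

import Mathlib

/-- Relations for the group `⟨a, b | a^(3^(t+1)) = b^(3^t) = 1, b⁻¹ab = a^(1+3^t)⟩`,
with generator `0` playing the role of `a` and `1` the role of `b`. -/
def gRels (t : ℕ) : Set (FreeGroup (Fin 2)) :=
  { FreeGroup.of 0 ^ 3 ^ (t + 1), FreeGroup.of 1 ^ 3 ^ t,
    (FreeGroup.of 1)⁻¹ * FreeGroup.of 0 * FreeGroup.of 1 *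
      (FreeGroup.of 0 ^ (1 + 3 ^ t))⁻¹ }

lemma aux_one_add_pow {R : Type*} [CommRing R] (x : R) (hx : x * x = 0) (n : ℕ) :
    (1 + x) ^ n = 1 + (n : R) * x := by
  induction n with
  | zero => simp
  | succ n ih =>
    rw [pow_succ, ih]
    push_cast
    linear_combination (n : R) * hx

lemma aux_inv_addLeft {α : Type*} [AddGroup α] (a : α) :
    (Equiv.addLeft a)⁻¹ = Equiv.addLeft (-a) := Equiv.coe_inj.1 rfl

lemma aux_pow_addLeft {α : Type*} [AddGroup α] (a : α) (n : ℕ) :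
    (Equiv.addLeft a) ^ n = Equiv.addLeft (n • a) := by
  ext y; simp [Equiv.Perm.coe_pow]

theorem stmt_8 (t : ℕ) (ht : 0 < t) :
    ¬ ∃ φ : PresentedGroup (gRels t) ≃* PresentedGroup (gRels t),
      φ (PresentedGroup.of 0) = (PresentedGroup.of 0 : PresentedGroup (gRels t))⁻¹ ∧
      φ (PresentedGroup.of 1) =
        (PresentedGroup.of 0 : PresentedGroup (gRels t)) ^ (3 * t) *
          (PresentedGroup.of 1 : PresentedGroup (gRels t))⁻¹ := by
  rintro ⟨φ, hφa, hφb⟩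
  set N : ℕ := 3 ^ (t + 1) with hN
  set x : ZMod N := ((3 ^ t : ℕ) : ZMod N) with hxdef
  have hx : x * x = 0 := by
    rw [hxdef, ← Nat.cast_mul, ZMod.natCast_eq_zero_iff, ← pow_add]
    exact pow_dvd_pow 3 (by omega)
  -- the unit 1 - x with inverse 1 + x
  have hux : (1 - x) * (1 + x) = 1 := by linear_combination -hx
  have hx3 : ((3 : ZMod N)) ^ t = x := by rw [hxdef]; push_cast; ring
  set u : (ZMod N)ˣ := ⟨1 - x, 1 + x, hux, by linear_combination -hx⟩ with hu
  have hupow : u ^ (3 ^ t) = 1 := by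
    ext
    push_cast
    show ((1 - x) ^ (3 ^ t) : ZMod N) = 1
    have := aux_one_add_pow (-x) (by simpa using hx) (3 ^ t)
    rw [show (1 : ZMod N) - x = 1 + (-x) by ring, this, ← hxdef]
    linear_combination -hx
  set A : Equiv.Perm (ZMod N) := Equiv.addLeft (1 : ZMod N) with hA
  set B : Equiv.Perm (ZMod N) := MulAction.toPermHom (ZMod N)ˣ (ZMod N) u with hB
  have hApow : ∀ n : ℕ, A ^ n = Equiv.addLeft ((n : ZMod N)) := by
    intro n
    rw [hA, aux_pow_addLeft]
    simp [nsmul_eq_mul]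
  have hBval : ∀ y : ZMod N, B y = (1 - x) * y := by
    intro y; rfl
  have hrels : ∀ r ∈ gRels t, FreeGroup.lift ![A, B] r = 1 := by
    rintro r (rfl | rfl | rfl)
    · rw [map_pow, FreeGroup.lift_apply_of]
      show A ^ N = 1
      rw [hApow, ZMod.natCast_self, Equiv.addLeft_zero]
    · rw [map_pow, FreeGroup.lift_apply_of]
      show B ^ (3 ^ t) = 1
      rw [hB, ← map_pow, hupow, map_one]
    · simp only [map_mul, map_inv, map_pow, FreeGroup.lift_apply_of]
      show B⁻¹ * A * B * (A ^ (1 + 3 ^ t))⁻¹ = 1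
      rw [mul_inv_eq_one]
      ext y
      rw [hApow]
      simp only [Equiv.Perm.mul_apply]
      show (B⁻¹) (A (B y)) = _
      have hBinv : (B⁻¹ : Equiv.Perm (ZMod N)) = MulAction.toPermHom (ZMod N)ˣ (ZMod N) u⁻¹ := by
        rw [hB, ← map_inv]
      rw [hBinv]
      show (↑u⁻¹ : ZMod N) * (A ((u : ZMod N) * y)) = _
      rw [hA]
      show (↑u⁻¹ : ZMod N) * (1 + (u : ZMod N) * y) = ((1 + 3 ^ t : ℕ) : ZMod N) + y
      have h1 : (↑u⁻¹ : ZMod N) = 1 + x := rfl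
      have h2 : (↑u : ZMod N) = 1 - x := rfl
      rw [h1, h2]
      push_cast
      rw [hx3]
      linear_combination (-y) * hx
  set F : PresentedGroup (gRels t) →* Equiv.Perm (ZMod N) := PresentedGroup.toGroup hrels with hF
  -- the relation in the presented group
  set a : PresentedGroup (gRels t) := PresentedGroup.of 0 with ha
  set b : PresentedGroup (gRels t) := PresentedGroup.of 1 with hb
  have hrel3 : b⁻¹ * a * b * (a ^ (1 + 3 ^ t))⁻¹ = 1 := by
    have : PresentedGroup.mk (gRels t)
        ((FreeGroup.of 1)⁻¹ * FreeGroup.of 0 * FreeGroup.of 1 *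
          (FreeGroup.of 0 ^ (1 + 3 ^ t))⁻¹) = 1 :=
      (QuotientGroup.eq_one_iff _).2
        (Subgroup.subset_normalClosure (by right; right; rfl))
    simp only [map_mul, map_inv, map_pow] at this; exact this
  have hconj : b⁻¹ * a * b = a ^ (1 + 3 ^ t) := mul_inv_eq_one.1 hrel3
  -- apply φ
  have hφ : (a ^ (3 * t) * b⁻¹)⁻¹ * a⁻¹ * (a ^ (3 * t) * b⁻¹) = (a ^ (1 + 3 ^ t))⁻¹ := by
    have := congrArg φ hconj
    rw [map_mul, map_mul, map_inv, map_pow, hφa, hφb] at this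
    rw [this]
    rw [inv_pow]
  have key : b * a⁻¹ * b⁻¹ = (a ^ (1 + 3 ^ t))⁻¹ := by
    rw [← hφ]; group
  -- push to the permutation group
  have keyF : F b * (F a)⁻¹ * (F b)⁻¹ = ((F a) ^ (1 + 3 ^ t))⁻¹ := by
    have := congrArg F key
    simpa [map_mul, map_inv, map_pow] using this
  have hFa : F a = A := by rw [hF, ha]; exact PresentedGroup.toGroup.of hrels
  have hFb : F b = B := by rw [hF, hb]; exact PresentedGroup.toGroup.of hrels
  rw [hFa, hFb] at keyF
  -- evaluate at 0
  have := congrFun (congrArg (fun (e : Equiv.Perm (ZMod N)) => (e : ZMod N → ZMod N)) keyF) 0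
  simp only [Equiv.Perm.coe_mul, Function.comp_apply] at this
  have hBinv : (B⁻¹ : Equiv.Perm (ZMod N)) = MulAction.toPermHom (ZMod N)ˣ (ZMod N) u⁻¹ := by
    rw [hB, ← map_inv]
  have lhs0 : (B * A⁻¹ * B⁻¹) 0 = (1 - x) * (-1) := by
    simp only [Equiv.Perm.mul_apply]
    rw [hBinv]
    show B ((A⁻¹) ((↑u⁻¹ : ZMod N) * 0)) = _
    rw [mul_zero, hA, aux_inv_addLeft]
    show B (-1 + 0) = _
    rw [add_zero, hBval]
  have rhs0 : ((A ^ (1 + 3 ^ t))⁻¹ : Equiv.Perm (ZMod N)) 0 = -(1 + x) := by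
    rw [hApow, aux_inv_addLeft]
    show -((1 + 3 ^ t : ℕ) : ZMod N) + 0 = _
    push_cast
    rw [hx3]
    ring
  have heq : (1 - x) * (-1) = -(1 + x) := by
    have h := congrFun (congrArg (fun (e : Equiv.Perm (ZMod N)) => (e : ZMod N → ZMod N)) keyF) 0
    calc (1 - x) * (-1) = (B * A⁻¹ * B⁻¹) 0 := lhs0.symm
    _ = ((A ^ (1 + 3 ^ t))⁻¹ : Equiv.Perm (ZMod N)) 0 := by rw [keyF]
    _ = -(1 + x) := rhs0
  have h2x : (2 : ZMod N) * x = 0 := by linear_combination heq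
  have : ((2 * 3 ^ t : ℕ) : ZMod N) = 0 := by push_cast; rw [hx3]; linear_combination h2x
  rw [ZMod.natCast_eq_zero_iff] at this
  have h1 : 3 ^ (t+1) ≤ 2 * 3 ^ t := Nat.le_of_dvd (by positivity) this
  have h2 : 3 ^ (t+1) = 3 * 3 ^ t := by ring
  have h3 : 0 < 3 ^ t := by positivity
  linarith
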